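/- Under Assumption B, for f a step function as described and (g_T) a family of solutions as described, there exist T₀ ≥ 1 and C > 0 such that for all T ≥ T₀ and all t ≥ 0 one has T·g_T(tT) ≤ C f(t)^{1/(1+β)}; consequently limsup_{T→∞} ∫_0^∞ g_T(t) dt ≤ C ∫_0^∞ f(t)^{1/(1+β)} dt < ∞, and sup_{t≥0} g_T(t) → 0 as T → ∞. -/

import Mathlib

set_option autoImplicit false
set_option maxHeartbeats 1000000

open MeasureTheory Filter Set

/-- Under Assumption B, for a nonnegative step function `f`
with support `[0,a]` and a family `(g_T)` of solutions of the basic equation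
(with `f_T(t) = T^{-(1+β)} f(t/T)`), there are `T₀ ≥ 1` and `C > 0` with
`T g_T(tT) ≤ C f(t)^{1/(1+β)}` for all `T ≥ T₀`, `t ≥ 0`; consequently
`f^{1/(1+β)}` is integrable,
`limsup_{T→∞} ∫_0^∞ g_T ≤ C ∫_0^∞ f^{1/(1+β)} < ∞`, and
`sup_{t ≥ 0} g_T(t) → 0` as `T → ∞`. -/
theorem stmt7
    -- Assumption B: mean-one offspring distribution with generating function G
    (p : ℕ → ℝ) (hp_nonneg : ∀ k, 0 ≤ p k)
    (hp_sum : ∑' k, p k = 1)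
    (hp_mean : ∑' k : ℕ, (k : ℝ) * p k = 1)
    (G H : ℝ → ℝ)
    (hG : ∀ s, G s = ∑' k, p k * s ^ k)
    (hH : ∀ u, H u = G (1 - u) - 1 + u)
    (β K : ℝ) (hβ : β ∈ Ioo (0 : ℝ) 1) (hK : 0 < K)
    (W : ℝ → ℝ) (hW_nonneg : ∀ x ∈ Icc (0 : ℝ) 1, 0 ≤ W x)
    (hW_bdd : ∃ M, ∀ x ∈ Icc (0 : ℝ) 1, W x ≤ M)
    (hW_lim : Tendsto W (nhdsWithin 0 (Ioi 0)) (nhds 1))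
    (hHW : ∀ x ∈ Icc (0 : ℝ) 1, H x = K * x ^ (1 + β) * W x)
    (C₀ : ℝ) (hC₀ : 0 < C₀)
    (hH_lip : ∀ x y : ℝ, 0 ≤ x → x ≤ y → y ≤ 1 →
      0 ≤ H y - H x ∧ H y - H x ≤ C₀ * (y - x) * y ^ β)
    -- φ : probability density on [0,∞)
    (φ : ℝ → ℝ) (hφ_meas : Measurable φ) (hφ_nonneg : ∀ t, 0 ≤ φ t)
    (hφ_zero : ∀ t < 0, φ t = 0)
    (hφ_int : ∫ t in Set.Ioi (0 : ℝ), φ t = 1)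
    -- the step function f and its scalings f_T
    (m : ℕ) (hm : 0 < m) (θ tk : ℕ → ℝ)
    (hθ : ∀ k < m, 0 ≤ θ k) (htk : ∀ k < m, 0 < tk k)
    (a : ℝ) (ha_mem : ∃ k < m, tk k = a) (ha_max : ∀ k < m, tk k ≤ a)
    (f : ℝ → ℝ)
    (hf : ∀ t, f t = ∑ k ∈ Finset.range m,
      Set.indicator (Icc (0 : ℝ) (tk k)) (fun _ => θ k) t)
    (fT : ℝ → ℝ → ℝ)
    (hfT : ∀ T t, fT T t = T ^ (-(1 + β)) * f (t / T))
    -- the family of solutions g_T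
    (g : ℝ → ℝ → ℝ)
    (hg_meas : ∀ T, Measurable (g T))
    (hg_mem : ∀ T ≥ (1 : ℝ), ∀ t, g T t ∈ Icc (0 : ℝ) 1)
    (hg_anti : ∀ T ≥ (1 : ℝ), AntitoneOn (g T) (Ici 0))
    (hg_supp : ∀ T ≥ (1 : ℝ), ∀ t, T * a < t → g T t = 0)
    (hg_eq : ∀ T ≥ (1 : ℝ), ∀ t ≥ (0 : ℝ), g T t =
      1 - Real.exp (-(fT T t)) *
        G (1 - ∫ s in Set.Ioi (0 : ℝ), g T (t + s) * φ s)) :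
    ∃ T₀ ≥ (1 : ℝ), ∃ C > (0 : ℝ),
      (∀ T ≥ T₀, ∀ t ≥ (0 : ℝ), T * g T (t * T) ≤ C * f t ^ (1 / (1 + β))) ∧
      IntegrableOn (fun t => f t ^ (1 / (1 + β))) (Ioi (0 : ℝ)) ∧
      Filter.limsup (fun T => ∫ t in Set.Ioi (0 : ℝ), g T t) atTop ≤
        C * ∫ t in Set.Ioi (0 : ℝ), f t ^ (1 / (1 + β)) ∧
      Tendsto (fun T => ⨆ t : Ici (0 : ℝ), g T ↑t) atTop (nhds 0) := by
  obtain ⟨hβ0, hβ1⟩ := hβ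
  obtain ⟨k₀, hk₀m, hk₀⟩ := ha_mem
  have ha : 0 < a := hk₀ ▸ htk k₀ hk₀m
  have h1β : (0:ℝ) < 1 + β := by linarith
  set p' : ℝ := 1 / (1 + β) with hp'
  have hp'0 : 0 < p' := by rw [hp']; exact one_div_pos.mpr h1β
  -- summability of p
  have hp_summable : Summable p := by
    by_contra h
    rw [tsum_eq_zero_of_not_summable h] at hp_sum; norm_num at hp_sum
  have hsumm : ∀ s : ℝ, 0 ≤ s → s ≤ 1 → Summable (fun k => p k * s ^ k) := by
    intro s h0 h1
    refine Summable.of_nonneg_of_le (fun k => mul_nonneg (hp_nonneg k) (pow_nonneg h0 k)) (fun k => ?_) hp_summable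
    calc p k * s ^ k ≤ p k * 1 :=
          mul_le_mul_of_nonneg_left (pow_le_one₀ h0 h1) (hp_nonneg k)
      _ = p k := mul_one _
  have hGmono : ∀ u v : ℝ, 0 ≤ u → u ≤ v → v ≤ 1 → G u ≤ G v := by
    intro u v h0 huv h1
    rw [hG, hG]
    exact Summable.tsum_le_tsum
      (fun k => mul_le_mul_of_nonneg_left (pow_le_pow_left₀ h0 huv k) (hp_nonneg k))
      (hsumm u h0 (huv.trans h1)) (hsumm v (h0.trans huv) h1)
  -- facts about f
  set B : ℝ := ∑ k ∈ Finset.range m, θ k with hBdef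
  have hB0 : 0 ≤ B := Finset.sum_nonneg fun k hk => hθ k (Finset.mem_range.mp hk)
  have hf0 : ∀ t, 0 ≤ f t := by
    intro t
    rw [hf]
    exact Finset.sum_nonneg fun k hk =>
      Set.indicator_nonneg (fun _ _ => hθ k (Finset.mem_range.mp hk)) t
  have hfB : ∀ t, f t ≤ B := by
    intro t
    rw [hf, hBdef]
    refine Finset.sum_le_sum fun k hk => ?_
    exact Set.indicator_apply_le' (fun _ => le_rfl) (fun _ => hθ k (Finset.mem_range.mp hk))
  have hf_zero : ∀ t, a < t → f t = 0 := by
    intro t ht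
    rw [hf]
    refine Finset.sum_eq_zero fun k hk => ?_
    apply Set.indicator_of_notMem
    intro hmem
    exact absurd hmem.2 (not_le.mpr (lt_of_le_of_lt (ha_max k (Finset.mem_range.mp hk)) ht))
  have hf_meas : Measurable f := by
    have : f = fun t => ∑ k ∈ Finset.range m,
        Set.indicator (Icc (0 : ℝ) (tk k)) (fun _ => θ k) t := funext hf
    rw [this]
    exact Finset.measurable_sum _ fun k _ =>
      Measurable.indicator measurable_const measurableSet_Icc
  -- lower bound on H
  have hW_half : ∀ᶠ x in nhdsWithin 0 (Ioi 0), (1:ℝ)/2 ≤ W x :=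
    hW_lim.eventually (eventually_ge_nhds (by norm_num))
  obtain ⟨δ, hδ0, hδ⟩ := Metric.eventually_nhds_iff.mp (eventually_nhdsWithin_iff.mp hW_half)
  set x₀ : ℝ := min (δ/2) 1 with hx₀def
  have hx₀0 : 0 < x₀ := lt_min (by linarith) one_pos
  have hx₀1 : x₀ ≤ 1 := min_le_right _ _
  have hx₀W : ∀ x : ℝ, 0 < x → x ≤ x₀ → 1/2 ≤ W x := by
    intro x hx hxx
    refine hδ ?_ hx
    rw [Real.dist_eq, sub_zero, abs_of_pos hx]
    calc x ≤ x₀ := hxx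
      _ ≤ δ/2 := min_le_left _ _
      _ < δ := by linarith
  have hH0 : H 0 = 0 := by
    rw [hHW 0 ⟨le_rfl, zero_le_one⟩, Real.zero_rpow (ne_of_gt h1β)]
    ring
  set c₁ : ℝ := K/2 * x₀ ^ (1+β) with hc₁def
  have hx₀p : 0 < x₀ ^ (1+β) := Real.rpow_pos_of_pos hx₀0 _
  have hc₁0 : 0 < c₁ := by positivity
  have hHlb : ∀ x : ℝ, 0 ≤ x → x ≤ 1 → c₁ * x ^ (1+β) ≤ H x := by
    intro x hx0 hx1
    rcases eq_or_lt_of_le hx0 with h | h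
    · rw [← h, Real.zero_rpow (ne_of_gt h1β), hH0, mul_zero]
    rcases le_or_gt x x₀ with hle | hlt
    · rw [hHW x ⟨hx0, hx1⟩]
      have h2 : 1/2 ≤ W x := hx₀W x h hle
      have hxp : 0 < x ^ (1+β) := Real.rpow_pos_of_pos h _
      have hx₀le : x₀ ^ (1+β) ≤ 1 := Real.rpow_le_one hx₀0.le hx₀1 h1β.le
      rw [hc₁def]
      have e1 : x₀ ^ (1+β) * x ^ (1+β) ≤ x ^ (1+β) := mul_le_of_le_one_left hxp.le hx₀le
      have e2 := mul_le_mul_of_nonneg_left (mul_le_mul_of_nonneg_right h2 hxp.le) hK.le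
      have e3 := mul_le_mul_of_nonneg_left e1 (by positivity : (0:ℝ) ≤ K/2)
      linarith [e2, e3]
    · have hmono := (hH_lip x₀ x hx₀0.le hlt.le hx1).1
      have hHx₀ : c₁ ≤ H x₀ := by
        rw [hHW x₀ ⟨hx₀0.le, hx₀1⟩, hc₁def]
        have hw := hx₀W x₀ hx₀0 le_rfl
        linarith [mul_le_mul_of_nonneg_left (mul_le_mul_of_nonneg_right hw hx₀p.le) hK.le]
      have hxle : x ^ (1+β) ≤ 1 := Real.rpow_le_one hx0 hx1 h1β.le
      linarith [mul_le_of_le_one_right hc₁0.le hxle]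
  -- the constant C
  set C : ℝ := (Real.exp B / c₁) ^ p' with hCdef
  have hC0 : 0 < C := Real.rpow_pos_of_pos (by positivity) _
  -- φ integrable
  have hφ_int' : IntegrableOn φ (Ioi (0:ℝ)) := by
    by_contra h
    rw [MeasureTheory.integral_undef h] at hφ_int
    norm_num at hφ_int
  have hmul1 : (1+β) * p' = 1 := by rw [hp']; field_simp
  -- main pointwise bound
  have main : ∀ T ≥ (1:ℝ), ∀ t ≥ (0:ℝ), T * g T (t*T) ≤ C * f t ^ p' := by
    intro T hT t ht
    have hT0 : (0:ℝ) < T := lt_of_lt_of_le one_pos hT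
    set t' := t * T with ht'def
    have ht'0 : (0:ℝ) ≤ t' := mul_nonneg ht hT0.le
    set x := g T t' with hxdef
    obtain ⟨hx0, hx1⟩ := hg_mem T hT t'
    have hint1 : IntegrableOn (fun s => g T (t' + s) * φ s) (Ioi (0:ℝ)) := by
      refine Integrable.mono' hφ_int'
        (((hg_meas T).comp (measurable_const.add measurable_id)).mul hφ_meas).aestronglyMeasurable ?_
      filter_upwards with s
      rw [Real.norm_eq_abs, abs_of_nonneg (mul_nonneg (hg_mem T hT _).1 (hφ_nonneg s))]
      exact mul_le_of_le_one_left (hφ_nonneg s) (hg_mem T hT _).2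
    have hint2 : IntegrableOn (fun s => x * φ s) (Ioi (0:ℝ)) := hφ_int'.const_mul x
    set q := ∫ s in Ioi (0:ℝ), g T (t' + s) * φ s with hqdef
    have hq0 : 0 ≤ q :=
      setIntegral_nonneg measurableSet_Ioi fun s _ =>
        mul_nonneg (hg_mem T hT _).1 (hφ_nonneg s)
    have hqx : q ≤ x := by
      have h1 : q ≤ ∫ s in Ioi (0:ℝ), x * φ s := by
        refine setIntegral_mono_on hint1 hint2 measurableSet_Ioi fun s hs => ?_
        refine mul_le_mul_of_nonneg_right ?_ (hφ_nonneg s)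
        exact hg_anti T hT (mem_Ici.mpr ht'0)
          (mem_Ici.mpr (by linarith [mem_Ioi.mp hs]))
          (le_add_of_nonneg_right (le_of_lt (mem_Ioi.mp hs)))
      rwa [MeasureTheory.integral_const_mul, hφ_int, mul_one] at h1
    have heq := hg_eq T hT t' ht'0
    have hceq : fT T t' = T ^ (-(1+β)) * f t := by
      rw [hfT]; congr 1; rw [ht'def]; field_simp
    set c : ℝ := T ^ (-(1+β)) * f t with hcdef
    have hrp : (0:ℝ) < T ^ (-(1+β)) := Real.rpow_pos_of_pos hT0 _
    have hc0 : 0 ≤ c := mul_nonneg hrp.le (hf0 t)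
    have hGx : G (1-x) ≤ G (1-q) := hGmono (1-x) (1-q) (by linarith) (by linarith) (by linarith)
    rw [← hxdef, ← hqdef, hceq] at heq
    have hkey : x ≤ 1 - Real.exp (-c) * G (1-x) := by
      have h5 := mul_le_mul_of_nonneg_left hGx (Real.exp_pos (-c)).le
      linarith [heq.le, h5]
    have hGH : G (1-x) = 1 - x + H x := by have := hH x; linarith
    have hHx0 : 0 ≤ H x := by
      have h1 := hHlb x hx0 hx1
      have h2 : 0 ≤ x ^ (1+β) := Real.rpow_nonneg hx0 _
      linarith [mul_nonneg hc₁0.le h2]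
    have hexp : Real.exp (-c) * (1 - x + H x) ≤ 1 - x := by
      rw [hGH] at hkey; linarith
    have hid : Real.exp c * Real.exp (-c) = 1 := by
      rw [← Real.exp_add]; simp
    have hHle : H x ≤ Real.exp c - 1 := by
      have h2 : 1 ≤ Real.exp c := Real.one_le_exp hc0
      have h1 : 1 - x + H x ≤ Real.exp c * (1 - x) := by
        calc 1 - x + H x = Real.exp c * (Real.exp (-c) * (1 - x + H x)) := by
              rw [← mul_assoc, hid, one_mul]
          _ ≤ Real.exp c * (1 - x) := mul_le_mul_of_nonneg_left hexp (Real.exp_pos c).le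
      have h4 : 0 ≤ x * (Real.exp c - 1) := mul_nonneg hx0 (by linarith)
      linarith [h1, h4]
    have hec : Real.exp c - 1 ≤ c * Real.exp B := by
      have h1 : 1 - c ≤ Real.exp (-c) := by linarith [Real.add_one_le_exp (-c)]
      have hcB : c ≤ B := by
        have hrp1 : T ^ (-(1+β)) ≤ 1 :=
          Real.rpow_le_one_of_one_le_of_nonpos hT (by linarith)
        calc c ≤ 1 * f t := by
              rw [hcdef]; exact mul_le_mul_of_nonneg_right hrp1 (hf0 t)
          _ = f t := one_mul _
          _ ≤ B := hfB t
      have h2 : Real.exp c ≤ Real.exp B := Real.exp_le_exp.mpr hcB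
      have hA : Real.exp c * (1 - c) ≤ 1 :=
        calc Real.exp c * (1 - c) ≤ Real.exp c * Real.exp (-c) :=
              mul_le_mul_of_nonneg_left h1 (Real.exp_pos c).le
          _ = 1 := hid
      have hB2 : c * Real.exp c ≤ c * Real.exp B := mul_le_mul_of_nonneg_left h2 hc0
      linarith [hA, hB2]
    have hxb : c₁ * x ^ (1+β) ≤ c * Real.exp B :=
      le_trans (le_trans (hHlb x hx0 hx1) hHle) hec
    have hxpow : x ^ (1+β) ≤ Real.exp B / c₁ * c := by
      rw [div_mul_eq_mul_div, le_div_iff₀ hc₁0]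
      linarith
    have hxle : x ≤ C * f t ^ p' / T := by
      have h1 : (x ^ (1+β)) ^ p' = x := by
        rw [← Real.rpow_mul hx0, hmul1, Real.rpow_one]
      have h2 : (x ^ (1+β)) ^ p' ≤ (Real.exp B / c₁ * c) ^ p' :=
        Real.rpow_le_rpow (Real.rpow_nonneg hx0 _) hxpow hp'0.le
      have h3 : (Real.exp B / c₁ * c) ^ p'
          = C * ((T ^ (-(1+β))) ^ p' * f t ^ p') := by
        rw [hcdef, Real.mul_rpow (by positivity) (mul_nonneg hrp.le (hf0 t)),
          Real.mul_rpow hrp.le (hf0 t), hCdef]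
      have h4 : ((T:ℝ) ^ (-(1+β))) ^ p' = T⁻¹ := by
        rw [← Real.rpow_mul hT0.le]
        have : -(1+β) * p' = -1 := by rw [hp']; field_simp
        rw [this, Real.rpow_neg_one]
      rw [h1] at h2
      rw [h3, h4] at h2
      calc x ≤ C * (T⁻¹ * f t ^ p') := h2
        _ = C * f t ^ p' / T := by field_simp
    rw [le_div_iff₀ hT0] at hxle
    linarith
  -- integrability of f^p'
  have hF_meas : Measurable fun t => f t ^ p' :=
    (Real.continuous_rpow_const hp'0.le).measurable.comp hf_meas
  have hFbd : ∀ t, f t ^ p' ≤ B ^ p' := fun t =>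
    Real.rpow_le_rpow (hf0 t) (hfB t) hp'0.le
  have hF0 : ∀ t, 0 ≤ f t ^ p' := fun t => Real.rpow_nonneg (hf0 t) _
  have hFzero : ∀ t, a < t → f t ^ p' = 0 := fun t ht => by
    rw [hf_zero t ht, Real.zero_rpow hp'0.ne']
  have hFint : IntegrableOn (fun t => f t ^ p') (Ioi (0:ℝ)) := by
    have h1 : IntegrableOn (fun t => f t ^ p') (Ioc 0 a) := by
      refine Integrable.mono' (integrableOn_const (C := B ^ p') measure_Ioc_lt_top.ne)
        hF_meas.aestronglyMeasurable ?_
      filter_upwards with t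
      rw [Real.norm_eq_abs, abs_of_nonneg (hF0 t)]
      exact hFbd t
    have h2 : IntegrableOn (fun t => f t ^ p') (Ioi a) :=
      IntegrableOn.congr_fun (integrableOn_zero) (fun t ht => (hFzero t ht).symm)
        measurableSet_Ioi
    have h3 := h1.union h2
    rwa [Ioc_union_Ioi_eq_Ioi ha.le] at h3
  -- integrability of g T
  have hgint : ∀ T : ℝ, 1 ≤ T → IntegrableOn (g T) (Ioi (0:ℝ)) := by
    intro T hT
    have hT0 : (0:ℝ) < T := lt_of_lt_of_le one_pos hT
    have hTa : (0:ℝ) < T * a := by positivity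
    have h1 : IntegrableOn (g T) (Ioc 0 (T*a)) := by
      refine Integrable.mono' (integrableOn_const (C := (1:ℝ)) measure_Ioc_lt_top.ne)
        (hg_meas T).aestronglyMeasurable ?_
      filter_upwards with t
      rw [Real.norm_eq_abs, abs_of_nonneg (hg_mem T hT t).1]
      exact (hg_mem T hT t).2
    have h2 : IntegrableOn (g T) (Ioi (T*a)) :=
      IntegrableOn.congr_fun (integrableOn_zero)
        (fun t ht => (hg_supp T hT t (mem_Ioi.mp ht)).symm) measurableSet_Ioi
    have h3 := h1.union h2
    rwa [Ioc_union_Ioi_eq_Ioi hTa.le] at h3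
  -- substitution identity
  have hsub : ∀ T : ℝ, 1 ≤ T →
      (∫ s in Ioi (0:ℝ), f (s / T) ^ p') = T * ∫ t in Ioi (0:ℝ), f t ^ p' := by
    intro T hT
    have hT0 : (0:ℝ) < T := lt_of_lt_of_le one_pos hT
    have h := integral_comp_mul_left_Ioi (fun u => f u ^ p') 0 (inv_pos.mpr hT0)
    simp only [mul_zero, inv_inv, smul_eq_mul] at h
    calc (∫ s in Ioi (0:ℝ), f (s / T) ^ p')
        = ∫ s in Ioi (0:ℝ), f (T⁻¹ * s) ^ p' := by
          refine setIntegral_congr_fun measurableSet_Ioi fun s _ => ?_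
          rw [div_eq_inv_mul]
      _ = T * ∫ t in Ioi (0:ℝ), f t ^ p' := h
  -- the comp functions are integrable
  have hcompint : ∀ T : ℝ, 1 ≤ T →
      IntegrableOn (fun s => f (s / T) ^ p') (Ioi (0:ℝ)) := by
    intro T hT
    have hT0 : (0:ℝ) < T := lt_of_lt_of_le one_pos hT
    have hTa : (0:ℝ) < T * a := by positivity
    have hmeas : Measurable fun s => f (s / T) ^ p' :=
      (Real.continuous_rpow_const hp'0.le).measurable.comp
        (hf_meas.comp (measurable_id.div_const T))
    have h1 : IntegrableOn (fun s => f (s / T) ^ p') (Ioc 0 (T*a)) := by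
      refine Integrable.mono' (integrableOn_const (C := B ^ p') measure_Ioc_lt_top.ne)
        hmeas.aestronglyMeasurable ?_
      filter_upwards with t
      rw [Real.norm_eq_abs, abs_of_nonneg (hF0 _)]
      exact hFbd _
    have h2 : IntegrableOn (fun s => f (s / T) ^ p') (Ioi (T*a)) := by
      refine IntegrableOn.congr_fun (integrableOn_zero) (fun s hs => ?_) measurableSet_Ioi
      have : a < s / T := by
        rw [lt_div_iff₀ hT0]
        calc a * T = T * a := mul_comm _ _
          _ < s := mem_Ioi.mp hs
      exact (hFzero _ this).symm
    have h3 := h1.union h2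
    rwa [Ioc_union_Ioi_eq_Ioi hTa.le] at h3
  -- bound on integrals
  have hIbd : ∀ T : ℝ, 1 ≤ T →
      (∫ t in Ioi (0:ℝ), g T t) ≤ C * ∫ t in Ioi (0:ℝ), f t ^ p' := by
    intro T hT
    have hT0 : (0:ℝ) < T := lt_of_lt_of_le one_pos hT
    have hptw : ∀ s ∈ Ioi (0:ℝ), g T s ≤ C / T * f (s / T) ^ p' := by
      intro s hs
      have hs0 : (0:ℝ) ≤ s := (mem_Ioi.mp hs).le
      have h := main T hT (s/T) (div_nonneg hs0 hT0.le)
      rw [div_mul_cancel₀ _ hT0.ne'] at h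
      rw [div_mul_eq_mul_div, le_div_iff₀ hT0]
      linarith
    calc (∫ t in Ioi (0:ℝ), g T t)
        ≤ ∫ s in Ioi (0:ℝ), C / T * f (s / T) ^ p' :=
          setIntegral_mono_on (hgint T hT) ((hcompint T hT).const_mul _)
            measurableSet_Ioi hptw
      _ = C / T * ∫ s in Ioi (0:ℝ), f (s / T) ^ p' := MeasureTheory.integral_const_mul _ _
      _ = C / T * (T * ∫ t in Ioi (0:ℝ), f t ^ p') := by rw [hsub T hT]
      _ = C * ∫ t in Ioi (0:ℝ), f t ^ p' := by field_simp
  -- limsup bound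
  have hlimsup : Filter.limsup (fun T => ∫ t in Ioi (0:ℝ), g T t) atTop ≤
      C * ∫ t in Ioi (0:ℝ), f t ^ p' := by
    refine Filter.limsup_le_of_le ?_ ?_
    · refine Filter.isCoboundedUnder_le_of_eventually_le atTop (x := 0) ?_
      filter_upwards [eventually_ge_atTop (1:ℝ)] with T hT
      exact setIntegral_nonneg measurableSet_Ioi fun t _ => (hg_mem T hT t).1
    · filter_upwards [eventually_ge_atTop (1:ℝ)] with T hT
      exact hIbd T hT
  -- sup tends to zero
  haveI : Nonempty (Ici (0:ℝ)) := ⟨⟨0, mem_Ici.mpr le_rfl⟩⟩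
  have hsup : Tendsto (fun T => ⨆ t : Ici (0:ℝ), g T ↑t) atTop (nhds 0) := by
    have hub : ∀ T : ℝ, 1 ≤ T → (⨆ t : Ici (0:ℝ), g T ↑t) ≤ C * B ^ p' / T := by
      intro T hT
      have hT0 : (0:ℝ) < T := lt_of_lt_of_le one_pos hT
      refine ciSup_le ?_
      rintro ⟨s, hs⟩
      have h := main T hT (s/T) (div_nonneg (mem_Ici.mp hs) hT0.le)
      rw [div_mul_cancel₀ _ hT0.ne'] at h
      have h2 : f (s/T) ^ p' ≤ B ^ p' := hFbd _
      rw [le_div_iff₀ hT0]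
      linarith [mul_le_mul_of_nonneg_left h2 hC0.le]
    have hlb : ∀ T : ℝ, 1 ≤ T → 0 ≤ ⨆ t : Ici (0:ℝ), g T ↑t := fun T hT =>
      Real.iSup_nonneg fun t => (hg_mem T hT ↑t).1
    refine tendsto_of_tendsto_of_tendsto_of_le_of_le'
      (tendsto_const_nhds : Tendsto (fun _ : ℝ => (0:ℝ)) atTop (nhds 0))
      (Filter.Tendsto.div_atTop (tendsto_const_nhds : Tendsto (fun _ : ℝ => C * B ^ p') atTop (nhds (C * B ^ p'))) tendsto_id) ?_ ?_
    · filter_upwards [eventually_ge_atTop (1:ℝ)] with T hT using hlb T hT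
    · filter_upwards [eventually_ge_atTop (1:ℝ)] with T hT using hub T hT
  exact ⟨1, le_rfl, C, hC0, main, hFint, hlimsup, hsup⟩
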